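/- Let (V, ‖·‖) be a normed real vector space and p ∈ V a point that is an extreme point of the closed ball B(0, ‖p‖). Then for every t ∈ [0,1], the set M^(t)(p, −p) := { z ∈ V : ‖z − p‖ = t·‖p − (−p)‖ and ‖z − (−p)‖ = (1−t)·‖p − (−p)‖ } equals the singleton { (1−2t)·p }. -/

import Mathlib

/-- If `p` is an extreme point of the closed ball of radius `‖p‖`, then
`M^(t)(p, -p)` is the singleton `{(1-2t) • p}`. -/
theorem Mt_singleton_of_extremePoint
    {V : Type*} [NormedAddCommGroup V] [NormedSpace ℝ V] (p : V)
    (hp : p ∈ Set.extremePoints ℝ (Metric.closedBall (0:V) ‖p‖)) :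
    ∀ t ∈ Set.Icc (0:ℝ) 1,
      {z : V | ‖z - p‖ = t * ‖p - (-p)‖ ∧ ‖z - (-p)‖ = (1 - t) * ‖p - (-p)‖}
        = {(1 - 2*t) • p} := by
  intro t ht
  obtain ⟨ht0, ht1⟩ := ht
  have hpp : ‖p + p‖ = 2 * ‖p‖ := by
    rw [← two_smul ℝ p, norm_smul]
    norm_num
  ext z
  simp only [Set.mem_setOf_eq, Set.mem_singleton_iff, sub_neg_eq_add]
  constructor
  · rintro ⟨h1, h2⟩
    rw [hpp] at h1 h2
    rcases eq_or_lt_of_le ht0 with h0 | h0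
    · -- t = 0
      have hz : z = p := by
        have : ‖z - p‖ = 0 := by rw [h1, ← h0]; ring
        rwa [norm_sub_eq_zero_iff] at this
      rw [hz, ← h0]
      norm_num
    rcases eq_or_lt_of_le ht1 with h1' | h1'
    · -- t = 1
      have hz : z = -p := by
        have : ‖z + p‖ = 0 := by rw [h2, ← h1']; ring
        have := norm_sub_eq_zero_iff.mp (by rwa [sub_neg_eq_add] : ‖z - (-p)‖ = 0)
        exact this
      rw [hz, h1']
      module
    · -- 0 < t < 1
      set x := (2*t)⁻¹ • (p - z) with hxdef
      set y := (2*(1-t))⁻¹ • (p + z) with hydef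
      have h2t : (0:ℝ) < 2*t := by linarith
      have h2t' : (0:ℝ) < 2*(1-t) := by linarith
      have hx : ‖x‖ = ‖p‖ := by
        rw [hxdef, norm_smul, norm_sub_rev, h1, Real.norm_eq_abs,
          abs_of_pos (inv_pos.mpr h2t)]
        field_simp
      have hy : ‖y‖ = ‖p‖ := by
        have : ‖p + z‖ = ‖z + p‖ := by rw [add_comm]
        rw [hydef, norm_smul, this, h2, Real.norm_eq_abs,
          abs_of_pos (inv_pos.mpr h2t')]
        field_simp
      have hseg : p ∈ openSegment ℝ x y := by
        refine ⟨t, 1 - t, h0, by linarith, by ring, ?_⟩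
        rw [hxdef, hydef, smul_smul, smul_smul]
        have e1 : t * (2*t)⁻¹ = (2:ℝ)⁻¹ := by field_simp
        have e2 : (1-t) * (2*(1-t))⁻¹ = (2:ℝ)⁻¹ := by
          field_simp
        rw [e1, e2]
        module
      have hmem : ∀ w : V, ‖w‖ = ‖p‖ → w ∈ Metric.closedBall (0:V) ‖p‖ := by
        intro w hw
        simp [Metric.mem_closedBall, hw]
      obtain ⟨hxp, hyp⟩ := (mem_extremePoints.mp hp).2 x (hmem x hx) y (hmem y hy) hseg
      -- x = p, i.e. (2t)⁻¹ • (p - z) = p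
      have : p - z = (2*t) • p := by
        have h := congrArg (fun w => (2*t) • w) hxp
        simp only [hxdef, smul_smul] at h
        rwa [mul_inv_cancel₀ (ne_of_gt h2t), one_smul] at h
      have : z = p - (2*t) • p := by
        rw [← this]; abel
      rw [this]
      module
  · rintro rfl
    rw [hpp]
    constructor
    · have : (1 - 2*t) • p - p = (-(2*t)) • p := by module
      rw [this, norm_smul, Real.norm_eq_abs, abs_neg, abs_of_nonneg (by linarith : (0:ℝ) ≤ 2*t)]
      ring
    · have : (1 - 2*t) • p + p = (2*(1-t)) • p := by module
      rw [this, norm_smul, Real.norm_eq_abs, abs_of_nonneg (by linarith : (0:ℝ) ≤ 2*(1-t))]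
      ring
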